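/- Let F be a field, let n ≥ 2, let x ∈ F with x ≠ 1 and x ≠ -1 (in particular x ≠ 0), and let y ∈ F. Then the multiplicative order of the n×n matrix Q(y,x) (in the monoid of n×n matrices over F, where order 0 means infinite order) equals the multiplicative order of x² in F: for every k ≥ 1, Q(y,x)^k = I if and only if (x²)^k = 1. -/

import Mathlib

open Matrix Finset

/-- Generalized Pascal matrix of the first kind: with 1-based indexing the (i,j) entry is
`y^(j-i) * binom(j-1, i-1)` for `j ≥ i` and `0` otherwise. Here indices are 0-based. -/
def pascal1 {R : Type*} [CommRing R] (n : ℕ) (y : R) : Matrix (Fin n) (Fin n) R :=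
  Matrix.of fun i j => if i ≤ j then y ^ (j.val - i.val) * (Nat.choose j.val i.val : R) else 0

/-- Zhang–Liu matrix: with 1-based indexing the (i,j) entry is
`y^(j-i) * x^(i+j-2) * binom(j-1, i-1)` for `j ≥ i` and `0` otherwise. Indices 0-based here. -/
def zhangLiu {R : Type*} [CommRing R] (n : ℕ) (y x : R) : Matrix (Fin n) (Fin n) R :=
  Matrix.of fun i j =>
    if i ≤ j then y ^ (j.val - i.val) * x ^ (i.val + j.val) * (Nat.choose j.val i.val : R) else 0

/-- `D(α)` : the diagonal matrix with (i,i) entry `α^(i-1)` (1-based), i.e. `α^i` 0-based. -/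
def diagD {R : Type*} [CommRing R] (n : ℕ) (α : R) : Matrix (Fin n) (Fin n) R :=
  Matrix.diagonal fun i : Fin n => α ^ i.val

lemma vandermonde_key {R : Type*} [CommRing R] (a b : R) {i j : ℕ} (h : i ≤ j) :
    ∑ m ∈ range (j + 1 - i),
      a ^ m * (Nat.choose (i + m) i : R) * (b ^ (j - (i + m)) * (Nat.choose j (i + m) : R))
      = (a + b) ^ (j - i) * (Nat.choose j i : R) := by
  have h1 : j + 1 - i = (j - i) + 1 := by omega
  rw [h1, add_pow, Finset.sum_mul]
  refine Finset.sum_congr rfl fun m hm => ?_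
  have hm' : m ≤ j - i := by simpa [Nat.lt_succ_iff] using hm
  have hc : Nat.choose j (i + m) * Nat.choose (i + m) i
      = Nat.choose j i * Nat.choose (j - i) m := by
    have := Nat.choose_mul (n := j) (k := i + m) (s := i) (by omega)
    simpa using this
  have h2 : j - (i + m) = (j - i) - m := by omega
  have hc' : (Nat.choose j (i + m) : R) * (Nat.choose (i + m) i : R)
      = (Nat.choose j i : R) * (Nat.choose (j - i) m : R) := by
    exact_mod_cast congrArg (Nat.cast : ℕ → R) hc
  rw [h2]
  linear_combination a ^ m * b ^ (j - i - m) * hc'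

lemma pascal1_mul {R : Type*} [CommRing R] (n : ℕ) (a b : R) :
    pascal1 n a * pascal1 n b = pascal1 n (a + b) := by
  ext i j
  simp only [pascal1, Matrix.mul_apply, Matrix.of_apply]
  by_cases hij : i ≤ j
  · rw [if_pos hij]
    have hij' : i.val ≤ j.val := hij
    have : ∀ l : Fin n, (if i ≤ l then a ^ (l.val - i.val) * (Nat.choose l.val i.val : R) else 0) *
        (if l ≤ j then b ^ (j.val - l.val) * (Nat.choose j.val l.val : R) else 0)
        = if l.val ∈ Finset.Icc i.val j.val then
            a ^ (l.val - i.val) * (Nat.choose l.val i.val : R) *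
              (b ^ (j.val - l.val) * (Nat.choose j.val l.val : R)) else 0 := by
      intro l
      by_cases h1 : i ≤ l
      · by_cases h2 : l ≤ j
        · rw [if_pos h1, if_pos h2, if_pos (Finset.mem_Icc.mpr ⟨Fin.le_def.mp h1, Fin.le_def.mp h2⟩)]
        · rw [if_pos h1, if_neg h2, mul_zero, if_neg]
          rw [Finset.mem_Icc]
          rintro ⟨-, hlj⟩
          exact h2 (Fin.le_def.mpr hlj)
      · rw [if_neg h1, zero_mul, if_neg]
        rw [Finset.mem_Icc]
        rintro ⟨hil, -⟩
        exact h1 (Fin.le_def.mpr hil)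
    rw [Finset.sum_congr rfl fun l _ => this l]
    rw [Fin.sum_univ_eq_sum_range
      (fun l => if l ∈ Finset.Icc i.val j.val then
        a ^ (l - i.val) * (Nat.choose l i.val : R) *
          (b ^ (j.val - l) * (Nat.choose j.val l : R)) else 0)]
    rw [← Finset.sum_filter]
    have hfil : (Finset.range n).filter (· ∈ Finset.Icc i.val j.val) = Finset.Icc i.val j.val := by
      ext l
      simp only [Finset.mem_filter, Finset.mem_range, Finset.mem_Icc]
      constructor
      · tauto
      · intro hl; exact ⟨lt_of_le_of_lt hl.2 j.isLt, hl⟩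
    rw [hfil]
    have : Finset.Icc i.val j.val = Finset.Ico i.val (j.val + 1) := by
      ext l; simp [Nat.lt_succ_iff]
    rw [this, Finset.sum_Ico_eq_sum_range]
    have := vandermonde_key a b hij'
    simpa using this
  · rw [if_neg hij]
    apply Finset.sum_eq_zero
    intro l _
    by_cases h1 : i ≤ l <;> by_cases h2 : l ≤ j
    · exact absurd (le_trans h1 h2) hij
    · simp [h2]
    · simp [h1]
    · simp [h1]

lemma pascal1_zero {R : Type*} [CommRing R] (n : ℕ) : pascal1 n (0 : R) = 1 := by
  ext i j
  simp only [pascal1, Matrix.of_apply, Matrix.one_apply]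
  rcases eq_or_ne i j with rfl | hne
  · simp
  · rw [if_neg hne]
    by_cases h : i ≤ j
    · rw [if_pos h]
      have : j.val - i.val ≠ 0 := by
        have : i.val ≠ j.val := fun h' => hne (Fin.ext h')
        have : i.val < j.val := lt_of_le_of_ne h this
        omega
      simp [zero_pow this]
    · rw [if_neg h]

lemma pascal1_mul_diagD {R : Type*} [CommRing R] (n : ℕ) (a β : R) :
    pascal1 n a * diagD n β = diagD n β * pascal1 n (β * a) := by
  ext i j
  simp only [pascal1, diagD, Matrix.mul_diagonal, Matrix.diagonal_mul, Matrix.of_apply]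
  by_cases h : i ≤ j
  · rw [if_pos h, if_pos h]
    have hb : β ^ j.val = β ^ i.val * β ^ (j.val - i.val) := by
      rw [← pow_add]
      congr 1
      omega
    rw [mul_pow, hb]
    ring
  · rw [if_neg h, if_neg h]; ring

lemma diagD_mul_diagD {R : Type*} [CommRing R] (n : ℕ) (α β : R) :
    diagD n α * diagD n β = diagD n (α * β) := by
  have h : (fun i : Fin n => α ^ i.val * β ^ i.val) = fun i => (α * β) ^ i.val := by
    funext i
    rw [mul_pow]
  unfold diagD
  rw [Matrix.diagonal_mul_diagonal, h]

lemma diagD_one {R : Type*} [CommRing R] (n : ℕ) : diagD n (1 : R) = 1 := by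
  simp [diagD]

lemma zhangLiu_eq {R : Type*} [CommRing R] (n : ℕ) (y x : R) :
    zhangLiu n y x = diagD n (x ^ 2) * pascal1 n (x * y) := by
  ext i j
  simp only [zhangLiu, pascal1, diagD, Matrix.diagonal_mul, Matrix.of_apply]
  by_cases h : i ≤ j
  · rw [if_pos h, if_pos h]
    have h' : i.val ≤ j.val := h
    have : i.val + j.val = 2 * i.val + (j.val - i.val) := by omega
    rw [this, pow_add, mul_pow, pow_mul]
    ring
  · rw [if_neg h, if_neg h]; ring

lemma zhangLiu_pow {R : Type*} [CommRing R] (n : ℕ) (y x : R) (k : ℕ) :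
    zhangLiu n y x ^ k
      = diagD n ((x ^ 2) ^ k) * pascal1 n (x * y * ∑ t ∈ range k, (x ^ 2) ^ t) := by
  induction k with
  | zero => simp [diagD_one, pascal1_zero]
  | succ k ih =>
    rw [pow_succ, ih, zhangLiu_eq, mul_assoc, ← mul_assoc (pascal1 n _),
      pascal1_mul_diagD, mul_assoc, pascal1_mul, ← mul_assoc, diagD_mul_diagD, ← pow_succ]
    exact congrArg₂ _ rfl (congrArg (pascal1 n) (by rw [geom_sum_succ]; ring))

theorem zhangLiu_order {F : Type*} [Field F] (n : ℕ) (hn : 2 ≤ n)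
    (x y : F) (hx1 : x ≠ 1) (hx2 : x ≠ -1) :
    orderOf (zhangLiu n y x) = orderOf (x ^ 2) ∧
      ∀ k : ℕ, 1 ≤ k → (zhangLiu n y x ^ k = 1 ↔ (x ^ 2) ^ k = 1) := by
  have hx2ne : x ^ 2 - 1 ≠ 0 := by
    intro h
    have : (x - 1) * (x + 1) = 0 := by linear_combination h
    rcases mul_eq_zero.1 this with h' | h'
    · exact hx1 (sub_eq_zero.1 h')
    · exact hx2 (eq_neg_of_add_eq_zero_left h')
  have key : ∀ k : ℕ, zhangLiu n y x ^ k = 1 ↔ (x ^ 2) ^ k = 1 := by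
    intro k
    constructor
    · intro h
      rw [zhangLiu_pow] at h
      have := congrFun (congrFun h ⟨1, by omega⟩) ⟨1, by omega⟩
      simp only [diagD, pascal1, Matrix.diagonal_mul, Matrix.of_apply, Matrix.one_apply_eq] at this
      simpa using this
    · intro h
      rw [zhangLiu_pow]
      have hs : (∑ t ∈ range k, (x ^ 2) ^ t) = 0 := by
        have := geom_sum_mul (x ^ 2) k
        rw [h, sub_self] at this
        exact (mul_eq_zero.1 this).resolve_right hx2ne
      rw [h, hs, mul_zero, diagD_one, pascal1_zero, one_mul]
  exact ⟨orderOf_eq_orderOf_iff.2 key, fun k _ => key k⟩
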